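/- Let $B \subseteq \mathbb{R}^n$ be the open unit ball and define $f(s,y) := s^{-1/2} \mathbf{1}_B(y)$ for $(s,y) \in (0,1) \times \mathbb{R}^n$. Then $f$ has finite $\mathrm{Z}^{\infty,q}_{-1/2}(1)$ norm for every $q \in (1,\infty)$, but $f \notin \L^2((0,1) \times B)$, i.e., $\int_0^1 \int_B |f(s,y)|^2 \, dy \, ds = \infty$. -/

import Mathlib

open MeasureTheory Set Metric
open scoped ENNReal

/-- The weighted Z-space quasinorm `‖f‖_{Z^{∞,q}_{-1/2}(T)}`. -/
noncomputable def Znorm (n : ℕ) (q : ℝ) (T : ℝ≥0∞) (f : ℝ → (Fin n → ℝ) → ℝ) : ℝ≥0∞ :=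
  ⨆ (x : Fin n → ℝ) (t : ℝ) (_ : 0 < t ∧ ENNReal.ofReal t < T),
    ((∫⁻ s in Set.Ioo (t / 2) t, ∫⁻ y in Metric.ball x (Real.sqrt t),
        ENNReal.ofReal (|Real.sqrt s * f s y| ^ q)) /
      (volume (Set.Ioo (t / 2) t) * volume (Metric.ball x (Real.sqrt t)))) ^ (1 / q)

/-- The function `f(s,y) = s^{-1/2} 𝟙_B(y)` on `(0,1) × ℝⁿ` has finite
`Z^{∞,q}_{-1/2}(1)` norm for every `q ∈ (1,∞)`, but is not square integrable on
`(0,1) × B`, where `B` is the open unit ball. -/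
theorem Znorm_not_subset_L2 (n : ℕ)
    (f : ℝ → (Fin n → ℝ) → ℝ)
    (hf : f = fun s y => s ^ (-(1 / 2 : ℝ)) *
      Set.indicator (Metric.ball (0 : Fin n → ℝ) 1) (fun _ => (1 : ℝ)) y) :
    (∀ q : ℝ, 1 < q → Znorm n q 1 f < ⊤) ∧
      (∫⁻ s in Set.Ioo (0 : ℝ) 1, ∫⁻ y in Metric.ball (0 : Fin n → ℝ) 1,
        ENNReal.ofReal (f s y ^ 2)) = ⊤ := by
  constructor
  · intro q hq
    have hq0 : (0 : ℝ) ≤ q := by linarith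
    have hbound : Znorm n q 1 f ≤ 1 := by
      refine iSup_le fun x => iSup_le fun t => iSup_le fun ht => ?_
      obtain ⟨ht0, -⟩ := ht
      set B := volume (Set.Ioo (t / 2) t) * volume (Metric.ball x (Real.sqrt t)) with hB
      have hA : (∫⁻ s in Set.Ioo (t / 2) t, ∫⁻ y in Metric.ball x (Real.sqrt t),
          ENNReal.ofReal (|Real.sqrt s * f s y| ^ q)) ≤ B := by
        have step : ∀ s ∈ Set.Ioo (t / 2) t,
            (∫⁻ y in Metric.ball x (Real.sqrt t),
              ENNReal.ofReal (|Real.sqrt s * f s y| ^ q)) ≤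
            volume (Metric.ball x (Real.sqrt t)) := by
          intro s hs
          have hs0 : 0 < s := lt_trans (by linarith) hs.1
          have hpt : ∀ y, ENNReal.ofReal (|Real.sqrt s * f s y| ^ q) ≤ 1 := by
            intro y
            have habs : |Real.sqrt s * f s y| ≤ 1 := by
              have hval : Real.sqrt s * f s y =
                  Set.indicator (Metric.ball (0 : Fin n → ℝ) 1) (fun _ => (1 : ℝ)) y := by
                rw [hf]
                have h2 : s ^ (-(1 / 2 : ℝ)) = (Real.sqrt s)⁻¹ := by
                  rw [Real.rpow_neg hs0.le, Real.sqrt_eq_rpow]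
                simp only [h2]
                rw [← mul_assoc, mul_inv_cancel₀ (Real.sqrt_ne_zero'.mpr hs0), one_mul]
              rw [hval]
              rcases Set.indicator_eq_zero_or_self (Metric.ball (0 : Fin n → ℝ) 1)
                (fun _ => (1 : ℝ)) y with h | h <;> simp [h]
            calc ENNReal.ofReal (|Real.sqrt s * f s y| ^ q) ≤ ENNReal.ofReal 1 :=
                  ENNReal.ofReal_le_ofReal (Real.rpow_le_one (abs_nonneg _) habs hq0)
              _ = 1 := ENNReal.ofReal_one
          calc (∫⁻ y in Metric.ball x (Real.sqrt t),
                ENNReal.ofReal (|Real.sqrt s * f s y| ^ q))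
              ≤ ∫⁻ _ in Metric.ball x (Real.sqrt t), 1 := lintegral_mono fun y => hpt y
            _ = volume (Metric.ball x (Real.sqrt t)) := by simp
        calc (∫⁻ s in Set.Ioo (t / 2) t, ∫⁻ y in Metric.ball x (Real.sqrt t),
              ENNReal.ofReal (|Real.sqrt s * f s y| ^ q))
            ≤ ∫⁻ _ in Set.Ioo (t / 2) t, volume (Metric.ball x (Real.sqrt t)) :=
              setLIntegral_mono' measurableSet_Ioo step
          _ = B := by rw [setLIntegral_const, hB, mul_comm]
      have hdiv : (∫⁻ s in Set.Ioo (t / 2) t, ∫⁻ y in Metric.ball x (Real.sqrt t),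
          ENNReal.ofReal (|Real.sqrt s * f s y| ^ q)) / B ≤ 1 :=
        ENNReal.div_le_of_le_mul (by simpa using hA)
      calc _ ≤ (1 : ℝ≥0∞) ^ (1 / q) := ENNReal.rpow_le_rpow hdiv (by positivity)
        _ = 1 := ENNReal.one_rpow _
    exact lt_of_le_of_lt hbound (by simp)
  · have hcongr : ∀ s ∈ Set.Ioo (0 : ℝ) 1,
        (∫⁻ y in Metric.ball (0 : Fin n → ℝ) 1, ENNReal.ofReal (f s y ^ 2)) =
        ENNReal.ofReal (s ^ (-1 : ℝ)) * volume (Metric.ball (0 : Fin n → ℝ) 1) := by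
      intro s hs
      have hs0 : 0 < s := hs.1
      have hpt : ∀ y ∈ Metric.ball (0 : Fin n → ℝ) 1,
          ENNReal.ofReal (f s y ^ 2) = ENNReal.ofReal (s ^ (-1 : ℝ)) := by
        intro y hy
        rw [hf]
        simp only [Set.indicator_of_mem hy, mul_one]
        rw [pow_two, ← Real.rpow_add hs0]
        norm_num
      rw [setLIntegral_congr_fun measurableSet_ball hpt, setLIntegral_const]
    rw [setLIntegral_congr_fun measurableSet_Ioo hcongr,
      lintegral_mul_const _ (measurable_id'.pow_const (-1 : ℝ)).ennreal_ofReal]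
    have hint : (∫⁻ s in Set.Ioo (0 : ℝ) 1, ENNReal.ofReal (s ^ (-1 : ℝ))) = ⊤ := by
      by_contra h
      have hne : (∫⁻ s in Set.Ioo (0 : ℝ) 1, ENNReal.ofReal (s ^ (-1 : ℝ))) ≠ ⊤ := h
      have hmeas : AEStronglyMeasurable (fun s : ℝ => s ^ (-1 : ℝ))
          (volume.restrict (Set.Ioo (0 : ℝ) 1)) := (measurable_id'.pow_const (-1 : ℝ)).aestronglyMeasurable
      have hnn : 0 ≤ᵐ[volume.restrict (Set.Ioo (0 : ℝ) 1)] fun s : ℝ => s ^ (-1 : ℝ) :=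
        (ae_restrict_iff' measurableSet_Ioo).2
          (ae_of_all _ fun s hs => Real.rpow_nonneg hs.1.le _)
      have hInt : IntegrableOn (fun s : ℝ => s ^ (-1 : ℝ)) (Set.Ioo (0 : ℝ) 1) :=
        (lintegral_ofReal_ne_top_iff_integrable hmeas hnn).1 hne
      rw [intervalIntegral.integrableOn_Ioo_rpow_iff zero_lt_one] at hInt
      exact lt_irrefl _ hInt
    rw [hint, ENNReal.top_mul (measure_ball_pos volume _ one_pos).ne']
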